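/- The 6-dimensional algebra D = H_α ⊕ H_α* with multiplication given by e1 ∗ e3 = e2, e3 ∗ e1 = α e2, e2* ∗ e2* = −(1+α)a e3*, e2* ∗ e1 = e3*, e1 ∗ e2* = α e3*, e3 ∗ e2* = e1* − (α+1)a e2, e2* ∗ e3 = α e1* − (α+1)a e2 (all other basis products zero) is an associative algebra, and the bilinear form B(x + a*, y + b*) = ⟨x,b*⟩ + ⟨a*,y⟩ is nondegenerate; hence (D, B) is a Frobenius algebra. -/

import Mathlib

open Finset

/-- An element of the double `D = H_α ⊕ H_α*`: a pair of coordinate vectors,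
the first w.r.t. the basis `e₁,e₂,e₃` of `H_α`, the second w.r.t. the dual
basis `e₁*,e₂*,e₃*` of `H_α*`. -/
abbrev Dbl := (Fin 3 → ℂ) × (Fin 3 → ℂ)

/-- The product on the double `D = H_α ⊕ H_α*`, determined bilinearly by:
`e₁ ∗ e₃ = e₂`, `e₃ ∗ e₁ = α e₂`, `e₂* ∗ e₂* = −(1+α) a e₃*`,
`e₂* ∗ e₁ = e₃*`, `e₁ ∗ e₂* = α e₃*`, `e₃ ∗ e₂* = e₁* − (α+1) a e₂`,
`e₂* ∗ e₃ = α e₁* − (α+1) a e₂`, all other basis products zero. -/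
def mulD (α a : ℂ) (p q : Dbl) : Dbl :=
  (fun k => if k = 1 then
      p.1 0 * q.1 2 + α * (p.1 2 * q.1 0)
        - (α + 1) * a * (p.1 2 * q.2 1 + p.2 1 * q.1 2)
    else 0,
   fun k =>
    if k = 0 then p.1 2 * q.2 1 + α * (p.2 1 * q.1 2)
    else if k = 2 then
      -(1 + α) * a * (p.2 1 * q.2 1) + p.2 1 * q.1 0 + α * (p.1 0 * q.2 1)
    else 0)

/-- The natural symmetric bilinear form on `D = H_α ⊕ H_α*`:
`B(x + a*, y + b*) = ⟨x, b*⟩ + ⟨a*, y⟩`. -/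
noncomputable def formB (p q : Dbl) : ℂ := (∑ k, p.1 k * q.2 k) + (∑ k, p.2 k * q.1 k)

/-- The double `D = H_α ⊕ H_α*` is an associative algebra and the natural
symmetric bilinear form `B` is nondegenerate; hence `(D, B)` is a Frobenius
algebra. -/
theorem double_is_Frobenius (α a : ℂ) :
    (∀ u v w : Dbl, mulD α a (mulD α a u v) w = mulD α a u (mulD α a v w)) ∧
    (∀ p : Dbl, (∀ q : Dbl, formB p q = 0) → p = 0) := by
  constructor
  · intro u v w
    refine Prod.ext ?_ ?_ <;> funext k <;> fin_cases k <;>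
      simp only [mulD, show ((0:Fin 3) = 1) = False by simp, show ((1:Fin 3) = 1) = True by simp,
        show ((2:Fin 3) = 1) = False by simp, show ((0:Fin 3) = 0) = True by simp,
        show ((1:Fin 3) = 0) = False by simp, show ((2:Fin 3) = 0) = False by simp,
        show ((1:Fin 3) = 2) = False by simp, show ((2:Fin 3) = 2) = True by simp,
        if_true, if_false] <;> ring_nf
  · intro p hp
    have h1 : ∀ k : Fin 3, p.1 k = 0 := by
      intro k
      have h := hp (0, fun j => if j = k then 1 else 0)
      clear hp
      rcases k with ⟨_ | _ | _ | _, hk⟩ <;>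
        simp_all [formB, Fin.sum_univ_three] <;> omega
    have h2 : ∀ k : Fin 3, p.2 k = 0 := by
      intro k
      have h := hp ((fun j => if j = k then 1 else 0), 0)
      clear hp h1
      rcases k with ⟨_ | _ | _ | _, hk⟩ <;>
        simp_all [formB, Fin.sum_univ_three] <;> omega
    refine Prod.ext ?_ ?_ <;> funext k
    · exact h1 k
    · exact h2 k
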